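/- arXiv:2103.03194 — 5 statements merged into one kernel-verified Lean document; each statement's English description precedes it below -/
import Mathlib

section
/- Let ψ: ℝ → ℝ be differentiable with ψ odd, ψ'(r) > 0 for every r > 0, ψ(r) ≤ C(1 + r) for every r ≥ 0 (for some constant C > 0), and suppose there exist a ≥ 0, b > 0 and s ∈ (0,1] such that (a + b·r^s)·ψ'(r) ≥ 1 for every r ≥ 0. Then there exist constants c > 0 and K ≥ 0 such that ψ(r)·r ≥ c·r^{2−s} − K for every r ≥ 0. -/
/-- Coercivity lower bound (C5) follows from (C1)-(C4) when `s ∈ (0,1]`. -/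
theorem stmt0 (ψ : ℝ → ℝ) (C a b s : ℝ)
    (hdiff : Differentiable ℝ ψ)
    (hodd : ∀ r : ℝ, ψ r = -ψ (-r))
    (hderiv_pos : ∀ r : ℝ, 0 < r → 0 < deriv ψ r)
    (hCpos : 0 < C)
    (hgrowth : ∀ r : ℝ, 0 ≤ r → ψ r ≤ C * (1 + r))
    (ha : 0 ≤ a) (hb : 0 < b) (hs : s ∈ Set.Ioc (0:ℝ) 1)
    (hC4 : ∀ r : ℝ, 0 ≤ r → (a + b * r ^ s) * deriv ψ r ≥ 1) :
    ∃ c : ℝ, 0 < c ∧ ∃ K : ℝ, 0 ≤ K ∧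
      ∀ r : ℝ, 0 ≤ r → ψ r * r ≥ c * r ^ (2 - s) - K := by
  obtain ⟨hs0, hs1⟩ := hs
  have hψ0 : ψ 0 = 0 := by have h := hodd 0; simp at h; linarith
  have hmono : StrictMonoOn ψ (Set.Ici 0) := by
    apply strictMonoOn_of_deriv_pos (convex_Ici 0) hdiff.continuous.continuousOn
    intro x hx
    rw [interior_Ici] at hx
    exact hderiv_pos x hx
  have hnonneg : ∀ r : ℝ, 0 ≤ r → 0 ≤ ψ r := by
    intro r hr
    rcases eq_or_lt_of_le hr with h | h
    · simp [← h, hψ0]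
    · have := hmono Set.self_mem_Ici (Set.mem_Ici.2 hr) h
      linarith [hψ0]
  have hab : 0 < a + b := by linarith
  refine ⟨1 / (2 * (a + b)), by positivity, 1 / (2 * (a + b)), by positivity, ?_⟩
  intro r hr
  rcases le_or_gt 1 r with h1 | h1
  · -- main case r ≥ 1
    have hrpos : (0:ℝ) < r := by linarith
    have hA1 : (1:ℝ) ≤ r ^ s := Real.one_le_rpow h1 hs0.le
    have hApos : (0:ℝ) < r ^ s := by linarith
    -- MVT on [r/2, r]
    have hhalf : r / 2 < r := by linarith
    obtain ⟨ξ, hξ, hder⟩ := exists_deriv_eq_slope ψ hhalf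
      hdiff.continuous.continuousOn (hdiff.differentiableOn)
    have hξ0 : 0 < ξ := lt_trans (by linarith) hξ.1
    have hξr : ξ ≤ r := hξ.2.le
    have hAξ : ξ ^ s ≤ r ^ s := Real.rpow_le_rpow hξ0.le hξr hs0.le
    have hdξ : 0 < deriv ψ ξ := hderiv_pos ξ hξ0
    have h4 := hC4 ξ hξ0.le
    have hderiv_lb : deriv ψ ξ ≥ 1 / (a + b * r ^ s) := by
      rw [ge_iff_le, div_le_iff₀ (by positivity)]
      have hstep : (a + b * ξ ^ s) * deriv ψ ξ ≤ (a + b * r ^ s) * deriv ψ ξ :=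
        mul_le_mul_of_nonneg_right
          (add_le_add_right (mul_le_mul_of_nonneg_left hAξ hb.le) a) hdξ.le
      calc (1:ℝ) ≤ (a + b * ξ ^ s) * deriv ψ ξ := h4
        _ ≤ (a + b * r ^ s) * deriv ψ ξ := hstep
        _ = deriv ψ ξ * (a + b * r ^ s) := by ring
    have hder' : deriv ψ ξ * (r / 2) = ψ r - ψ (r / 2) := by
      have hne : r - r / 2 ≠ 0 := by intro h; nlinarith
      have h2 := hder
      rw [eq_div_iff hne] at h2
      rw [show r - r / 2 = r / 2 by ring] at h2
      exact h2
    have hψhalf : 0 ≤ ψ (r / 2) := hnonneg _ (by linarith)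
    have hψr : ψ r ≥ (r / 2) / (a + b * r ^ s) := by
      have hmul : deriv ψ ξ * (r / 2) ≥ (1 / (a + b * r ^ s)) * (r / 2) :=
        mul_le_mul_of_nonneg_right hderiv_lb (by linarith)
      have heq : (1 / (a + b * r ^ s)) * (r / 2) = (r / 2) / (a + b * r ^ s) := by ring
      linarith [hmul, hder', heq.symm.le, heq.le]
    -- combine
    have hAB : r ^ s * r ^ (2 - s) = r * r := by
      rw [← Real.rpow_add hrpos, show s + (2 - s) = 2 by ring,
        show (2:ℝ) = ((2:ℕ):ℝ) by norm_num, Real.rpow_natCast]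
      ring
    have hBr2 : r ^ (2 - s) ≤ r * r := by
      have h := Real.rpow_le_rpow_of_exponent_le h1 (show 2 - s ≤ 2 by linarith)
      rwa [show (2:ℝ) = ((2:ℕ):ℝ) by norm_num, Real.rpow_natCast, sq] at h
    have hBpos : 0 < r ^ (2 - s) := Real.rpow_pos_of_pos hrpos _
    have key : (r / 2) / (a + b * r ^ s) * r ≥ 1 / (2 * (a + b)) * r ^ (2 - s) := by
      rw [ge_iff_le, div_mul_eq_mul_div, div_mul_eq_mul_div,
        div_le_div_iff₀ (by positivity) (by positivity)]
      nlinarith [hAB, hBr2, mul_le_mul_of_nonneg_left hBr2 ha,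
        mul_comm (r ^ s) (r ^ (2 - s))]
    have hfin : ψ r * r ≥ (r / 2) / (a + b * r ^ s) * r :=
      mul_le_mul_of_nonneg_right hψr hr
    have hc : (0:ℝ) < 1 / (2 * (a + b)) := by positivity
    linarith [key, hfin, hc]
  · -- small r: ψ r * r ≥ 0 and rhs ≤ 0
    have hB1 : r ^ (2 - s) ≤ 1 := Real.rpow_le_one hr h1.le (by linarith)
    have := mul_nonneg (hnonneg r hr) hr
    have hc : (0:ℝ) < 1 / (2 * (a + b)) := by positivity
    have := mul_le_mul_of_nonneg_left hB1 hc.le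
    nlinarith [mul_nonneg (hnonneg r hr) hr]
end

section
/- Let L > 0 and let ψ : ℝ → ℝ be continuously differentiable with ψ'(r) > 0 for every r ∈ ℝ. Let u, v : [0,L] → ℝ be continuously differentiable with u(0) = v(0) = u(L) = v(L) = 0, and set γ(λ)(x) := u'(x) + λ(v'(x) − u'(x)) for λ ∈ [0,1], x ∈ [0,L]. Then ∫₀^L (ψ(u'(x)) − ψ(v'(x)))·(u'(x) − v'(x)) dx ≥ (1/L)·(∫₀^L (u(x) − v(x))² dx) · ∫₀¹ ( ∫₀^L (ψ'(γ(λ)(x)))^{-1} dx )^{-1} dλ. -/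
open Set MeasureTheory intervalIntegral

lemma cs_aux {L : ℝ} (hL : 0 < L) {g e : ℝ → ℝ} (hg : Continuous g) (he : Continuous e)
    (hgpos : ∀ x, 0 < g x) :
    (∫ x in (0:ℝ)..L, |e x|) ^ 2
      ≤ (∫ x in (0:ℝ)..L, g x * e x ^ 2) * ∫ x in (0:ℝ)..L, (g x)⁻¹ := by
  set S := ∫ x in (0:ℝ)..L, g x * e x ^ 2 with hS
  set I := ∫ x in (0:ℝ)..L, (g x)⁻¹ with hI
  set J := ∫ x in (0:ℝ)..L, |e x| with hJ
  have hgi : Continuous fun x => (g x)⁻¹ := hg.inv₀ fun x => (hgpos x).ne'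
  have hIpos : 0 < I :=
    intervalIntegral_pos_of_pos_on (hgi.intervalIntegrable 0 L)
      (fun x _ => inv_pos.mpr (hgpos x)) hL
  have hJnn : 0 ≤ J := integral_nonneg hL.le fun x _ => abs_nonneg _
  have hSnn : 0 ≤ S := integral_nonneg hL.le fun x _ =>
    mul_nonneg (hgpos x).le (sq_nonneg _)
  rcases eq_or_lt_of_le hJnn with hJ0 | hJpos
  · rw [← hJ0]; simpa using mul_nonneg hSnn hIpos.le
  · set t := J / I with ht
    have htpos : 0 < t := div_pos hJpos hIpos
    have hpt : ∀ x, |e x| ≤ (1 / (2 * t)) * (g x * e x ^ 2) + (t / 2) * (g x)⁻¹ := by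
      intro x
      have hgx := hgpos x
      have key : 0 ≤ (g x * |e x| - t) ^ 2 := sq_nonneg _
      have hres : (1 / (2 * t)) * (g x * e x ^ 2) + (t / 2) * (g x)⁻¹
          = ((g x) ^ 2 * (e x) ^ 2 + t ^ 2) / (2 * t * g x) := by
        field_simp
      rw [hres, le_div_iff₀ (by positivity)]
      nlinarith [key, sq_abs (e x)]
    have hint : J ≤ (1 / (2 * t)) * S + (t / 2) * I := by
      have h1 : IntervalIntegrable (fun x => |e x|) volume 0 L :=
        he.abs.intervalIntegrable 0 L
      have h2 : IntervalIntegrable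
          (fun x => (1 / (2 * t)) * (g x * e x ^ 2) + (t / 2) * (g x)⁻¹) volume 0 L :=
        ((continuous_const.mul (hg.mul (he.pow 2))).add
          (continuous_const.mul hgi)).intervalIntegrable 0 L
      calc J ≤ ∫ x in (0:ℝ)..L, ((1 / (2 * t)) * (g x * e x ^ 2) + (t / 2) * (g x)⁻¹) :=
            integral_mono_on hL.le h1 h2 fun x _ => hpt x
        _ = (1 / (2 * t)) * S + (t / 2) * I := by
            rw [integral_add (f := fun x => (1 / (2 * t)) * (g x * e x ^ 2))
              (g := fun x => (t / 2) * (g x)⁻¹) ((continuous_const.mul (hg.mul (he.pow 2))).intervalIntegrable 0 L)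
              ((continuous_const.mul hgi).intervalIntegrable 0 L),
              intervalIntegral.integral_const_mul, intervalIntegral.integral_const_mul]
    have htI : t * I = J := div_mul_cancel₀ _ hIpos.ne'
    have htinv : t * (1 / (2 * t)) = 1 / 2 := by field_simp
    nlinarith [hint, htpos, hIpos, hJpos, mul_le_mul_of_nonneg_left hint htpos.le]

/-- One-dimensional stability estimate for the singular Φ-Laplace operator:
`⟨A(u) − A(v), u − v⟩ ≥ (1/L)·‖u − v‖²_{L²}·∫₀¹ (∫₀^L (ψ'(γ(λ)))⁻¹)⁻¹ dλ`. -/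
theorem stmt6 (L : ℝ) (hL : 0 < L) (ψ : ℝ → ℝ) (hψ : ContDiff ℝ 1 ψ)
    (hψ' : ∀ r : ℝ, 0 < deriv ψ r)
    (u v u' v' : ℝ → ℝ)
    (hu : ∀ x ∈ Set.Icc (0:ℝ) L, HasDerivWithinAt u (u' x) (Set.Icc 0 L) x)
    (hv : ∀ x ∈ Set.Icc (0:ℝ) L, HasDerivWithinAt v (v' x) (Set.Icc 0 L) x)
    (hu' : ContinuousOn u' (Set.Icc 0 L)) (hv' : ContinuousOn v' (Set.Icc 0 L))
    (hu0 : u 0 = 0) (hv0 : v 0 = 0) (huL : u L = 0) (hvL : v L = 0) :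
    (∫ x in (0:ℝ)..L, (ψ (u' x) - ψ (v' x)) * (u' x - v' x))
      ≥ (1 / L) * (∫ x in (0:ℝ)..L, (u x - v x) ^ 2) *
        ∫ l in (0:ℝ)..1, (∫ x in (0:ℝ)..L, (deriv ψ (u' x + l * (v' x - u' x)))⁻¹)⁻¹ := by
  have hL' : (0:ℝ) ≤ L := hL.le
  -- continuous extensions of `u'`, `v'`
  set π : ℝ → ℝ := fun x => max 0 (min x L) with hπdef
  have hπc : Continuous π := continuous_const.max (continuous_id.min continuous_const)
  have hπmem : ∀ x, π x ∈ Icc (0:ℝ) L :=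
    fun x => ⟨le_max_left _ _, max_le hL' (min_le_right _ _)⟩
  have hπid : ∀ x ∈ Icc (0:ℝ) L, π x = x := fun x hx => by
    simp [hπdef, min_eq_left hx.2, max_eq_right hx.1]
  set c : ℝ → ℝ := u' ∘ π with hcdef
  set d : ℝ → ℝ := v' ∘ π with hddef
  have hcc : Continuous c := hu'.comp_continuous hπc hπmem
  have hdc : Continuous d := hv'.comp_continuous hπc hπmem
  have hceq : ∀ x ∈ Icc (0:ℝ) L, c x = u' x := fun x hx => by
    simp [hcdef, Function.comp, hπid x hx]
  have hdeq : ∀ x ∈ Icc (0:ℝ) L, d x = v' x := fun x hx => by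
    simp [hddef, Function.comp, hπid x hx]
  have hψc : Continuous (deriv ψ) := hψ.continuous_deriv le_rfl
  have hψdiff : Differentiable ℝ ψ := hψ.differentiable one_ne_zero
  set G : ℝ → ℝ → ℝ := fun l x => deriv ψ (c x + l * (d x - c x)) with hGdef
  have hGc : Continuous (Function.uncurry G) := by
    apply hψc.comp
    exact (hcc.comp continuous_snd).add
      (continuous_fst.mul ((hdc.comp continuous_snd).sub (hcc.comp continuous_snd)))
  have hGlc : ∀ l, Continuous (G l) := fun l => hGc.comp (Continuous.prodMk_right l)
  have hGpos : ∀ l x, 0 < G l x := fun l x => hψ' _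
  set e : ℝ → ℝ := fun x => c x - d x with hedef
  have hec : Continuous e := hcc.sub hdc
  set H : ℝ → ℝ → ℝ := fun l x => G l x * e x ^ 2 with hHdef
  have hHc : Continuous (Function.uncurry H) :=
    hGc.mul (((hec.comp continuous_snd).pow 2))
  set J := ∫ x in (0:ℝ)..L, |e x| with hJdef
  have hJnn : 0 ≤ J := integral_nonneg hL' fun x _ => abs_nonneg _
  set A := ∫ x in (0:ℝ)..L, (u x - v x) ^ 2 with hAdef
  -- bound `A ≤ L * J ^ 2`
  have hwcont : ContinuousOn (fun y => u y - v y) (Icc (0:ℝ) L) :=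
    fun y hy => ((hu y hy).sub (hv y hy)).continuousWithinAt
  have hwbd : ∀ x ∈ Icc (0:ℝ) L, (u x - v x) ^ 2 ≤ J ^ 2 := by
    intro x hx
    have hx0 : (0:ℝ) ≤ x := hx.1
    have hxL : x ≤ L := hx.2
    have hsub : Icc (0:ℝ) x ⊆ Icc 0 L := Icc_subset_Icc le_rfl hxL
    have hFTC : ∫ t in (0:ℝ)..x, (u' t - v' t) = (u x - v x) - (u 0 - v 0) := by
      apply integral_eq_sub_of_hasDeriv_right_of_le hx0 (hwcont.mono hsub)
      · intro t ht
        have ht' : t ∈ Icc (0:ℝ) L := ⟨ht.1.le, (ht.2.trans_le hxL).le⟩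
        have hmem : Icc (0:ℝ) L ∈ nhdsWithin t (Ioi t) :=
          mem_nhdsWithin_of_mem_nhds (Icc_mem_nhds ht.1 (ht.2.trans_le hxL))
        exact ((hu t ht').sub (hv t ht')).mono_of_mem_nhdsWithin hmem
      · exact ((hu'.sub hv').mono (by rw [uIcc_of_le hx0]; exact hsub)).intervalIntegrable
    have heq : ∫ t in (0:ℝ)..x, (u' t - v' t) = ∫ t in (0:ℝ)..x, e t := by
      refine integral_congr fun t ht => ?_
      rw [uIcc_of_le hx0] at ht
      have ht' : t ∈ Icc (0:ℝ) L := hsub ht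
      simp [hedef, hceq t ht', hdeq t ht']
    have hval : u x - v x = ∫ t in (0:ℝ)..x, e t := by
      rw [← heq, hFTC, hu0, hv0]; ring
    have habs : |u x - v x| ≤ J := by
      rw [hval]
      calc |∫ t in (0:ℝ)..x, e t| ≤ ∫ t in (0:ℝ)..x, |e t| :=
            abs_integral_le_integral_abs hx0
        _ ≤ J := integral_mono_interval le_rfl hx0 hxL
            (ae_of_all _ fun t => abs_nonneg _) (hec.abs.intervalIntegrable 0 L)
    calc (u x - v x) ^ 2 = |u x - v x| ^ 2 := (sq_abs _).symm
      _ ≤ J ^ 2 := pow_le_pow_left₀ (abs_nonneg _) habs 2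
  have hAJ : A ≤ L * J ^ 2 := by
    have h1 : IntervalIntegrable (fun x => (u x - v x) ^ 2) volume 0 L :=
      ((hwcont.pow 2).mono (by rw [uIcc_of_le hL'])).intervalIntegrable
    calc A ≤ ∫ _x in (0:ℝ)..L, J ^ 2 :=
          integral_mono_on hL' h1 intervalIntegrable_const hwbd
      _ = L * J ^ 2 := by simp
  -- per-parameter quantities
  set Sf : ℝ → ℝ := fun l => ∫ x in (0:ℝ)..L, H l x with hSfdef
  set If : ℝ → ℝ := fun l => ∫ x in (0:ℝ)..L, (G l x)⁻¹ with hIfdef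
  have hGinvc : ∀ l, Continuous fun x => (G l x)⁻¹ :=
    fun l => (hGlc l).inv₀ fun x => (hGpos l x).ne'
  have hIfpos : ∀ l, 0 < If l := fun l =>
    intervalIntegral_pos_of_pos_on ((hGinvc l).intervalIntegrable 0 L)
      (fun x _ => inv_pos.mpr (hGpos l x)) hL
  have hper : ∀ l, 1 / L * A * (If l)⁻¹ ≤ Sf l := by
    intro l
    have hcs : J ^ 2 ≤ Sf l * If l := cs_aux hL (hGlc l) hec (hGpos l)
    have h4 : A ≤ L * (Sf l * If l) :=
      hAJ.trans (mul_le_mul_of_nonneg_left hcs hL')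
    have hInn : (0:ℝ) ≤ (If l)⁻¹ := (inv_pos.mpr (hIfpos l)).le
    calc 1 / L * A * (If l)⁻¹
        ≤ 1 / L * (L * (Sf l * If l)) * (If l)⁻¹ :=
          mul_le_mul_of_nonneg_right
            (mul_le_mul_of_nonneg_left h4 (by positivity)) hInn
      _ = Sf l := by
            field_simp
            exact mul_div_cancel_right₀ _ (hIfpos l).ne'
  -- continuity in the parameter
  have hSfc : Continuous Sf :=
    continuous_parametric_intervalIntegral_of_continuous' hHc 0 L
  have hIfc : Continuous If := by
    apply continuous_parametric_intervalIntegral_of_continuous' (μ := volume)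
      (f := fun l x => (G l x)⁻¹) _ 0 L
    exact hGc.inv₀ fun p => (hGpos p.1 p.2).ne'
  -- rewrite the LHS
  have hpt : ∀ a b : ℝ,
      ψ b - ψ a = (∫ l in (0:ℝ)..1, deriv ψ (a + l * (b - a))) * (b - a) := by
    intro a b
    have h1 : ∫ l in (0:ℝ)..1, deriv ψ (a + l * (b - a)) * (b - a)
        = ψ (a + 1 * (b - a)) - ψ (a + 0 * (b - a)) := by
      refine integral_eq_sub_of_hasDerivAt (f := fun l : ℝ => ψ (a + l * (b - a)))
        (fun l _ => ?_)
        (((hψc.comp (continuous_const.add (continuous_id.mul continuous_const))).mul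
          continuous_const).intervalIntegrable 0 1)
      have haff : HasDerivAt (fun l : ℝ => a + l * (b - a)) (b - a) l := by
        simpa using ((hasDerivAt_id l).mul_const (b - a)).const_add a
      exact (hψdiff (a + l * (b - a))).hasDerivAt.comp l haff
    rw [intervalIntegral.integral_mul_const] at h1
    have e1 : a + 1 * (b - a) = b := by ring
    have e0 : a + 0 * (b - a) = a := by ring
    rw [e1, e0] at h1
    exact h1.symm
  have hLHS : (∫ x in (0:ℝ)..L, (ψ (u' x) - ψ (v' x)) * (u' x - v' x))
      = ∫ x in (0:ℝ)..L, ∫ l in (0:ℝ)..1, H l x := by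
    refine integral_congr fun x hx => ?_
    rw [uIcc_of_le hL'] at hx
    rw [← hceq x hx, ← hdeq x hx]
    have key := hpt (c x) (d x)
    have hmul : ∫ l in (0:ℝ)..1, H l x
        = (∫ l in (0:ℝ)..1, G l x) * e x ^ 2 := intervalIntegral.integral_mul_const _ _
    rw [hmul]
    have hex : e x = c x - d x := rfl
    rw [hex]
    linear_combination (d x - c x) * key
  -- Fubini
  have hfub : (∫ x in (0:ℝ)..L, ∫ l in (0:ℝ)..1, H l x) = ∫ l in (0:ℝ)..1, Sf l := by
    have hint : Integrable (Function.uncurry fun x l => H l x)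
        ((volume.restrict (Ioc (0:ℝ) L)).prod (volume.restrict (Ioc (0:ℝ) 1))) := by
      rw [Measure.prod_restrict]
      have hc : Continuous (Function.uncurry fun x l => H l x) :=
        hHc.comp continuous_swap
      have h2 : IntegrableOn (Function.uncurry fun x l => H l x)
          (Icc (0:ℝ) L ×ˢ Icc (0:ℝ) 1) (volume.prod volume) :=
        hc.continuousOn.integrableOn_compact (isCompact_Icc.prod isCompact_Icc)
      exact h2.mono_set (prod_mono Ioc_subset_Icc_self Ioc_subset_Icc_self)
    simp only [hSfdef]
    rw [integral_of_le hL', integral_of_le (zero_le_one' ℝ)]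
    simp only [integral_of_le hL', integral_of_le (zero_le_one' ℝ)]
    exact MeasureTheory.integral_integral_swap hint
  -- rewrite the RHS
  have hcongr : ∀ l : ℝ,
      (∫ x in (0:ℝ)..L, (deriv ψ (u' x + l * (v' x - u' x)))⁻¹) = If l := by
    intro l
    refine integral_congr fun x hx => ?_
    rw [uIcc_of_le hL'] at hx
    rw [← hceq x hx, ← hdeq x hx]
  have hRHS : (1 / L) * A *
        (∫ l in (0:ℝ)..1, (∫ x in (0:ℝ)..L, (deriv ψ (u' x + l * (v' x - u' x)))⁻¹)⁻¹)
      = ∫ l in (0:ℝ)..1, 1 / L * A * (If l)⁻¹ := by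
    simp only [hcongr]
    rw [intervalIntegral.integral_const_mul]
  rw [ge_iff_le, hRHS, hLHS, hfub]
  apply integral_mono_on zero_le_one _ (hSfc.intervalIntegrable 0 1) fun l _ => hper l
  exact (continuous_const.mul (hIfc.inv₀ fun l => (hIfpos l).ne')).intervalIntegrable 0 1
end

section
/- Let s ∈ (0,2] and C > 0, and let g : [0,∞) → [0,∞) be differentiable with g'(t) ≤ −2C·g(t)^{(2−s)/2} for every t ≥ 0. Then g(t) ≤ ( max(g(0)^{s/2} − C·s·t, 0) )^{2/s} for every t ≥ 0; in particular, g(t) = 0 for all t ≥ g(0)^{s/2}/(C·s), and g(t) → 0 as t → ∞. -/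
/-- ODE comparison lemma with finite-time extinction: if `g' ≤ −2C·g^{(2−s)/2}` then
`g(t) ≤ (max(g(0)^{s/2} − Cst, 0))^{2/s}`, `g` vanishes after time `g(0)^{s/2}/(Cs)`,
and `g(t) → 0` as `t → ∞`. -/
theorem stmt11 (s C : ℝ) (hs : s ∈ Set.Ioc (0:ℝ) 2) (hC : 0 < C)
    (g g' : ℝ → ℝ)
    (hg : ∀ t : ℝ, 0 ≤ t → HasDerivAt g (g' t) t)
    (hgnonneg : ∀ t : ℝ, 0 ≤ t → 0 ≤ g t)
    (hineq : ∀ t : ℝ, 0 ≤ t → g' t ≤ -2 * C * g t ^ ((2 - s) / 2)) :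
    (∀ t : ℝ, 0 ≤ t → g t ≤ (max (g 0 ^ (s / 2) - C * s * t) 0) ^ (2 / s)) ∧
    (∀ t : ℝ, g 0 ^ (s / 2) / (C * s) ≤ t → g t = 0) ∧
    Filter.Tendsto g Filter.atTop (nhds 0) := by
  obtain ⟨hs0, hs2⟩ := hs
  have hk : 0 < C * s := mul_pos hC hs0
  -- g is antitone on [0, ∞)
  have hanti : AntitoneOn g (Set.Ici 0) := by
    apply antitoneOn_of_deriv_nonpos (convex_Ici 0)
    · intro x hx
      exact (hg x hx).continuousAt.continuousWithinAt
    · intro x hx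
      rw [interior_Ici] at hx
      exact (hg x hx.le).differentiableAt.differentiableWithinAt
    · intro x hx
      rw [interior_Ici] at hx
      rw [(hg x hx.le).deriv]
      have h1 := hineq x hx.le
      have h2 : (0:ℝ) ≤ g x ^ ((2 - s) / 2) := Real.rpow_nonneg (hgnonneg x hx.le) _
      nlinarith
  -- key inequality
  have key : ∀ t : ℝ, 0 ≤ t → g t ^ (s / 2) ≤ max (g 0 ^ (s / 2) - C * s * t) 0 := by
    intro t ht
    rcases eq_or_lt_of_le (hgnonneg t ht) with h0 | hpos
    · rw [← h0, Real.zero_rpow (by positivity : s / 2 ≠ 0)]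
      exact le_max_right _ _
    · have hpos' : ∀ u ∈ Set.Icc (0:ℝ) t, 0 < g u := fun u hu =>
        lt_of_lt_of_le hpos (hanti (Set.mem_Ici.mpr hu.1) (Set.mem_Ici.mpr ht) hu.2)
      set φ : ℝ → ℝ := fun u => g u ^ (s / 2) + C * s * u with hφ
      have hderiv : ∀ u ∈ Set.Icc (0:ℝ) t,
          HasDerivAt φ (g' u * (s / 2) * g u ^ (s / 2 - 1) + C * s) u := by
        intro u hu
        have h1 := (hg u hu.1).rpow_const (p := s / 2) (Or.inl (ne_of_gt (hpos' u hu)))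
        have h2 : HasDerivAt (fun x : ℝ => C * s * x) (C * s) u := by
          simpa using (hasDerivAt_id u).const_mul (C * s)
        exact h1.add h2
      have hmono : AntitoneOn φ (Set.Icc 0 t) := by
        apply antitoneOn_of_deriv_nonpos (convex_Icc 0 t)
        · intro u hu
          exact (hderiv u hu).continuousAt.continuousWithinAt
        · intro u hu
          rw [interior_Icc] at hu
          exact (hderiv u ⟨hu.1.le, hu.2.le⟩).differentiableAt.differentiableWithinAt
        · intro u hu
          rw [interior_Icc] at hu
          have hu' : u ∈ Set.Icc (0:ℝ) t := ⟨hu.1.le, hu.2.le⟩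
          rw [(hderiv u hu').deriv]
          have hgu := hpos' u hu'
          have hr : (0:ℝ) < g u ^ (s / 2 - 1) := Real.rpow_pos_of_pos hgu _
          have h1 := hineq u hu.1.le
          have h2 : g' u * (s / 2) * g u ^ (s / 2 - 1) ≤
              (-2 * C * g u ^ ((2 - s) / 2)) * (s / 2) * g u ^ (s / 2 - 1) :=
            mul_le_mul_of_nonneg_right
              (mul_le_mul_of_nonneg_right h1 (by positivity)) hr.le
          have h4 : g u ^ ((2 - s) / 2) * g u ^ (s / 2 - 1) = 1 := by
            rw [← Real.rpow_add hgu, show (2 - s) / 2 + (s / 2 - 1) = 0 by ring,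
              Real.rpow_zero]
          have h3 : (-2 * C * g u ^ ((2 - s) / 2)) * (s / 2) * g u ^ (s / 2 - 1)
              = -(C * s) * (g u ^ ((2 - s) / 2) * g u ^ (s / 2 - 1)) := by ring
          rw [h3, h4, mul_one] at h2
          linarith
      have hAB := hmono (Set.left_mem_Icc.mpr ht) (Set.right_mem_Icc.mpr ht) ht
      simp only [hφ, mul_zero, add_zero] at hAB
      have : g t ^ (s / 2) ≤ g 0 ^ (s / 2) - C * s * t := by linarith
      exact le_trans this (le_max_left _ _)
  have part2 : ∀ t : ℝ, g 0 ^ (s / 2) / (C * s) ≤ t → g t = 0 := by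
    intro t ht
    have hanum : (0:ℝ) ≤ g 0 ^ (s / 2) := Real.rpow_nonneg (hgnonneg 0 le_rfl) _
    have ht0 : (0:ℝ) ≤ t := le_trans (div_nonneg hanum hk.le) ht
    have hkey := key t ht0
    have hle : g 0 ^ (s / 2) - C * s * t ≤ 0 := by
      rw [div_le_iff₀ hk] at ht
      nlinarith
    rw [max_eq_right hle] at hkey
    have h0 : g t ^ (s / 2) = 0 :=
      le_antisymm hkey (Real.rpow_nonneg (hgnonneg t ht0) _)
    exact (Real.rpow_eq_zero (hgnonneg t ht0) (by positivity : s / 2 ≠ 0)).mp h0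
  refine ⟨?_, part2, ?_⟩
  · intro t ht
    have hkey := key t ht
    have heq : g t = (g t ^ (s / 2)) ^ (2 / s) := by
      rw [← Real.rpow_mul (hgnonneg t ht),
        show s / 2 * (2 / s) = 1 by field_simp, Real.rpow_one]
    rw [heq]
    exact Real.rpow_le_rpow (Real.rpow_nonneg (hgnonneg t ht) _) hkey (by positivity)
  · apply Filter.Tendsto.congr' _ tendsto_const_nhds
    filter_upwards [Filter.Ici_mem_atTop (g 0 ^ (s / 2) / (C * s))] with t ht
    exact (part2 t ht).symm
end

section
/- For every r > 0, | 1/(1+r²) − arctan(r)/r | + arctan(r)/r ≤ 4·√( min( 1/(1+r²), arctan(r)/r ) ). -/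
open Real Set

lemma arctan_nn (r : ℝ) (hr : 0 ≤ r) : 0 ≤ Real.arctan r := by
  rw [← Real.arctan_zero]
  exact Real.arctan_strictMono.monotone hr

lemma aux_arctan_le_self (r : ℝ) (hr : 0 ≤ r) : Real.arctan r ≤ r := by
  have h : ∀ x ∈ Ici (0:ℝ), HasDerivAt (fun y => y - Real.arctan y) (1 - 1/(1+x^2)) x := by
    intro x _
    exact (hasDerivAt_id x).sub (Real.hasDerivAt_arctan x)
  have hm : MonotoneOn (fun y => y - Real.arctan y) (Ici 0) := by
    apply monotoneOn_of_deriv_nonneg (convex_Ici 0)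
      (Continuous.continuousOn (by continuity))
      (fun x hx => (h x (interior_subset hx)).differentiableAt.differentiableWithinAt)
    intro x hx
    rw [(h x (interior_subset hx)).deriv]
    have : (0:ℝ) < 1 + x^2 := by positivity
    have : 1/(1+x^2) ≤ 1 := by
      rw [div_le_one this]; nlinarith
    linarith
  have := hm (self_mem_Ici) (mem_Ici.mpr hr) hr
  simp [Real.arctan_zero] at this
  linarith

lemma aux_le_arctan (r : ℝ) (hr : 0 ≤ r) : r / (1 + r^2) ≤ Real.arctan r := by
  have h : ∀ x : ℝ, HasDerivAt (fun y => Real.arctan y - y/(1+y^2))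
      (1/(1+x^2) - (1*(1+x^2) - x*(2*x))/(1+x^2)^2) x := by
    intro x
    have hx : (1:ℝ) + x^2 ≠ 0 := by positivity
    have hd := (Real.hasDerivAt_arctan x).sub
      ((hasDerivAt_id x).div ((hasDerivAt_const x (1:ℝ)).add (hasDerivAt_pow 2 x)) hx)
    convert hd using 1
    · rfl
    · rfl
    · rfl
    · simp
  have hm : MonotoneOn (fun y => Real.arctan y - y/(1+y^2)) (Ici 0) := by
    apply monotoneOn_of_deriv_nonneg (convex_Ici 0)
      (Continuous.continuousOn (by
        apply Real.continuous_arctan.sub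
        exact continuous_id.div (by continuity) (fun x => by positivity)))
      (fun x hx => (h x).differentiableAt.differentiableWithinAt)
    intro x hx
    rw [(h x).deriv]
    have h1 : (0:ℝ) < 1 + x^2 := by positivity
    rw [div_sub_div _ _ (ne_of_gt h1) (ne_of_gt (by positivity : (0:ℝ) < (1+x^2)^2))]
    apply div_nonneg _ (by positivity)
    nlinarith
  have := hm (self_mem_Ici) (mem_Ici.mpr hr) hr
  simp [Real.arctan_zero] at this
  linarith

lemma aux_key (r : ℝ) (hr : 0 < r) : Real.arctan r * Real.sqrt (1 + r^2) ≤ 2 * r := by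
  have hs : Real.sqrt (1+r^2) ^ 2 = 1 + r^2 := Real.sq_sqrt (by positivity)
  have hs0 : 0 ≤ Real.sqrt (1+r^2) := Real.sqrt_nonneg _
  rcases le_or_gt (r^2) 3 with h | h
  · have h1 : Real.arctan r ≤ r := aux_arctan_le_self r hr.le
    have h2 : Real.sqrt (1+r^2) ≤ 2 := by
      rw [show (2:ℝ) = Real.sqrt 4 by rw [show (4:ℝ) = 2^2 by norm_num, Real.sqrt_sq]; norm_num]
      exact Real.sqrt_le_sqrt (by linarith)
    have h0 : 0 ≤ Real.arctan r := arctan_nn r hr.le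
    nlinarith
  · have h1 : Real.arctan r ≤ 1.575 := by
      have := Real.arctan_lt_pi_div_two r
      have := Real.pi_lt_d2
      linarith
    have h0 : 0 ≤ Real.arctan r := arctan_nn r hr.le
    have ha2 : Real.arctan r ^ 2 ≤ 1.575^2 := by nlinarith
    have hsq : (Real.arctan r * Real.sqrt (1+r^2))^2 ≤ (2*r)^2 := by
      nlinarith [mul_le_mul_of_nonneg_right ha2 (sq_nonneg (Real.sqrt (1+r^2)))]
    have h2r : (0:ℝ) ≤ 2*r := by linarith
    exact (pow_le_pow_iff_left₀ (by positivity) h2r two_ne_zero).mp hsq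

/-- The curve shortening flow nonlinearity `ψ(r) = arctan r` satisfies condition (C7)
with constant `M = 4`. -/
theorem stmt13 :
    ∀ r : ℝ, 0 < r →
      |1 / (1 + r ^ 2) - Real.arctan r / r| + Real.arctan r / r
        ≤ 4 * Real.sqrt (min (1 / (1 + r ^ 2)) (Real.arctan r / r)) := by
  intro r hr
  have h1 : (0:ℝ) < 1 + r^2 := by positivity
  have hmin : min (1 / (1 + r ^ 2)) (Real.arctan r / r) = 1 / (1 + r^2) := by
    apply min_eq_left
    rw [div_le_div_iff₀ h1 hr]
    have := aux_le_arctan r hr.le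
    rw [div_le_iff₀ h1] at this
    linarith
  rw [hmin]
  have habs : |1 / (1 + r ^ 2) - Real.arctan r / r| = Real.arctan r / r - 1/(1+r^2) := by
    rw [abs_of_nonpos]
    · ring
    · have := aux_le_arctan r hr.le
      rw [div_le_iff₀ h1] at this
      rw [sub_nonpos, div_le_div_iff₀ h1 hr]
      linarith
  rw [habs]
  have hs : Real.sqrt (1/(1+r^2)) = 1 / Real.sqrt (1+r^2) := by
    rw [one_div, one_div, Real.sqrt_inv]
  rw [hs]
  have hsp : 0 < Real.sqrt (1+r^2) := Real.sqrt_pos.mpr h1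
  have hkey := aux_key r hr
  have h2 : Real.arctan r / r ≤ 2 / Real.sqrt (1+r^2) := by
    rw [div_le_div_iff₀ hr hsp]; linarith
  have h3 : 0 < 1/(1+r^2) := by positivity
  calc Real.arctan r / r - 1/(1+r^2) + Real.arctan r / r
      ≤ 2 * (Real.arctan r / r) := by linarith
    _ ≤ 2 * (2 / Real.sqrt (1+r^2)) := by linarith
    _ = 4 * (1 / Real.sqrt (1+r^2)) := by ring
end

section
/- For every r > 0, | 1/(1+r) − log(1+r)/r | + log(1+r)/r ≤ 2·√( min( 1/(1+r), log(1+r)/r ) ). -/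
lemma aux_log_le : ∀ t : ℝ, 1 ≤ t → 2 * Real.log t ≤ t - t⁻¹ := by
  intro t ht
  set f : ℝ → ℝ := fun s => s - s⁻¹ - 2 * Real.log s with hf
  have hder : ∀ x : ℝ, 1 < x → HasDerivAt f (1 - (-(x^2)⁻¹) - 2 * x⁻¹) x := by
    intro x hx1
    have hx0 : (0:ℝ) < x := by linarith
    exact ((hasDerivAt_id x).sub (hasDerivAt_inv hx0.ne')).sub
      ((Real.hasDerivAt_log hx0.ne').const_mul 2)
  have hmono : MonotoneOn f (Set.Ici 1) := by
    apply monotoneOn_of_deriv_nonneg (convex_Ici 1)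
    · apply continuousOn_of_forall_continuousAt
      intro x hx
      have hx0 : x ≠ 0 := by
        have : (1:ℝ) ≤ x := hx
        positivity
      exact (continuousAt_id.sub (continuousAt_inv₀ hx0)).sub
        ((Real.continuousAt_log hx0).const_mul 2)
    · intro x hx
      rw [interior_Ici] at hx
      exact (hder x hx).differentiableAt.differentiableWithinAt
    · intro x hx
      rw [interior_Ici] at hx
      have hx1 : (1:ℝ) < x := hx
      have hx0 : (0:ℝ) < x := by linarith
      rw [(hder x hx1).deriv]
      have heq : (1:ℝ) - (-(x^2)⁻¹) - 2 * x⁻¹ = (1 - x⁻¹)^2 := by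
        field_simp
        ring
      rw [heq]
      positivity
  have h1 : f 1 ≤ f t := hmono (by simp) (by exact ht) ht
  have hf1 : f 1 = 0 := by simp [hf]
  rw [hf1] at h1
  simp only [hf] at h1
  linarith

/-- The logarithmic diffusion nonlinearity `ψ(r) = log(1+|r|)·sgn(r)` satisfies
condition (C7) with constant `M = 2`. -/
theorem stmt14 :
    ∀ r : ℝ, 0 < r →
      |1 / (1 + r) - Real.log (1 + r) / r| + Real.log (1 + r) / r
        ≤ 2 * Real.sqrt (min (1 / (1 + r)) (Real.log (1 + r) / r)) := by
  intro r hr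
  have h1 : (0:ℝ) < 1 + r := by linarith
  -- lower bound: r/(1+r) ≤ log(1+r)
  have hlb : r / (1 + r) ≤ Real.log (1 + r) := by
    have h := Real.log_le_sub_one_of_pos (show (0:ℝ) < 1 / (1 + r) by positivity)
    rw [Real.log_div one_ne_zero (ne_of_gt h1), Real.log_one] at h
    have h2 : 1 - 1 / (1 + r) ≤ Real.log (1 + r) := by linarith
    have h3 : r / (1 + r) = 1 - 1 / (1 + r) := by field_simp; ring
    linarith
  have hs : 0 < Real.sqrt (1 + r) := Real.sqrt_pos.mpr h1
  have ht1 : 1 ≤ Real.sqrt (1 + r) := by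
    have := Real.sqrt_le_sqrt (show (1:ℝ) ≤ 1 + r by linarith)
    simpa using this
  have hsq : Real.sqrt (1 + r) ^ 2 = 1 + r := Real.sq_sqrt h1.le
  -- upper bound: log(1+r) ≤ r / √(1+r)
  have hub : Real.log (1 + r) ≤ r / Real.sqrt (1 + r) := by
    have h2 : Real.log (Real.sqrt (1 + r)) = Real.log (1 + r) / 2 := Real.log_sqrt h1.le
    have h3 := aux_log_le (Real.sqrt (1 + r)) ht1
    rw [h2] at h3
    have h4 : Real.sqrt (1 + r) - (Real.sqrt (1 + r))⁻¹ = r / Real.sqrt (1 + r) := by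
      rw [eq_div_iff hs.ne']
      nlinarith [hsq, mul_inv_cancel₀ hs.ne']
    rw [h4] at h3
    linarith
  -- min is 1/(1+r)
  have hL : 1 / (1 + r) ≤ Real.log (1 + r) / r := by
    rw [div_le_div_iff₀ h1 hr]
    have := (div_le_iff₀ h1).mp hlb
    linarith
  have hmin : min (1 / (1 + r)) (Real.log (1 + r) / r) = 1 / (1 + r) :=
    min_eq_left hL
  rw [hmin]
  have hsqrt : Real.sqrt (1 / (1 + r)) = 1 / Real.sqrt (1 + r) := by
    rw [one_div, Real.sqrt_inv, one_div]
  rw [hsqrt]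
  rw [abs_of_nonpos (by linarith : 1 / (1 + r) - Real.log (1 + r) / r ≤ 0)]
  have hLub : Real.log (1 + r) / r ≤ 1 / Real.sqrt (1 + r) := by
    rw [div_le_div_iff₀ hr hs]
    calc Real.log (1 + r) * Real.sqrt (1 + r)
        ≤ (r / Real.sqrt (1 + r)) * Real.sqrt (1 + r) :=
          mul_le_mul_of_nonneg_right hub hs.le
      _ = r := by field_simp
      _ = 1 * r := (one_mul r).symm
  have hpos : 0 < 1 / (1 + r) := by positivity
  linarith
end
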